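/- Let R be a ring and M a left R-module. M is finitely generated if and only if for every family (Q_i)_{i∈I} of left R-modules, the canonical map φ : M ⊗_R (∏_{i∈I} Q_i) → ∏_{i∈I} (M ⊗_R Q_i), sending m ⊗ (q_i) to (m ⊗ q_i), is surjective. -/

import Mathlib

open TensorProduct

lemma exists_rep_aux (R M Q : Type) [CommRing R] [AddCommGroup M] [Module R M]
    [AddCommGroup Q] [Module R Q] (s : Finset M) (hs : Submodule.span R (s : Set M) = ⊤)
    (t : M ⊗[R] Q) : ∃ q : M → Q, t = ∑ m ∈ s, m ⊗ₜ[R] q m := by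
  classical
  let L : (M → Q) →ₗ[R] M ⊗[R] Q :=
    { toFun := fun q => ∑ m ∈ s, m ⊗ₜ[R] q m
      map_add' := by
        intro q1 q2
        simp [tmul_add, Finset.sum_add_distrib]
      map_smul' := by
        intro r q
        simp [tmul_smul, Finset.smul_sum] }
  suffices h : LinearMap.range L = ⊤ by
    obtain ⟨q, hq⟩ := (LinearMap.range_eq_top.mp h) t
    exact ⟨q, hq.symm⟩
  have key : ∀ (m : M) (n : Q), m ⊗ₜ[R] n ∈ LinearMap.range L := by
    intro m n
    have hm : m ∈ Submodule.span R (s : Set M) := hs ▸ Submodule.mem_top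
    induction hm using Submodule.span_induction with
    | mem x hx =>
      refine ⟨fun m' => if m' = x then n else 0, ?_⟩
      show ∑ m' ∈ s, m' ⊗ₜ[R] (if m' = x then n else 0) = x ⊗ₜ[R] n
      rw [Finset.sum_eq_single x]
      · simp
      · intro b _ hb; simp [hb]
      · intro hxs; exact absurd hx hxs
    | zero =>
      rw [zero_tmul]; exact Submodule.zero_mem _
    | add x y _ _ hx hy =>
      rw [add_tmul]; exact Submodule.add_mem _ hx hy
    | smul r x _ hx =>
      rw [← smul_tmul']
      exact Submodule.smul_mem _ r hx
  rw [← top_le_iff, ← span_tmul_eq_top R M Q, Submodule.span_le]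
  rintro _ ⟨m, n, rfl⟩
  exact key m n

/-- A module `M` over a ring `R` is finitely generated if and only if
for every family `(Q i)_{i ∈ I}` of `R`-modules, the canonical map
`M ⊗[R] (∏ i, Q i) → ∏ i, (M ⊗[R] Q i)`, sending `m ⊗ (q i)` to `(m ⊗ q i)`, is surjective. -/
theorem finite_iff_piRightHom_surjective
    (R : Type) [CommRing R] (M : Type) [AddCommGroup M] [Module R M] :
    Module.Finite R M ↔
      ∀ (ι : Type) (Q : ι → Type) [∀ i, AddCommGroup (Q i)] [∀ i, Module R (Q i)],
        Function.Surjective (TensorProduct.piRightHom R R M Q) := by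
  classical
  constructor
  · intro hM ι Q _ _ t
    obtain ⟨s, hs⟩ := hM.fg_top
    choose q hq using fun i => exists_rep_aux R M (Q i) s hs (t i)
    refine ⟨∑ m ∈ s, m ⊗ₜ[R] (fun i => q i m), ?_⟩
    funext i
    rw [map_sum]
    simp only [piRightHom_tmul]
    rw [Finset.sum_apply]
    exact (hq i).symm
  · intro h
    obtain ⟨x, hx⟩ := h M (fun _ => R) (fun m => m ⊗ₜ[R] (1 : R))
    obtain ⟨S, rfl⟩ := TensorProduct.exists_finset x
    refine ⟨⟨S.image Prod.fst, ?_⟩⟩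
    rw [eq_top_iff]
    intro m _
    simp only [map_sum, piRightHom_tmul] at hx
    have hm := congrFun hx m
    rw [Finset.sum_apply] at hm
    have h2 := congrArg (TensorProduct.rid R M) hm
    rw [map_sum] at h2
    simp only [TensorProduct.rid_tmul, one_smul] at h2
    rw [← h2]
    exact Submodule.sum_mem _ fun p hp =>
      Submodule.smul_mem _ _ (Submodule.subset_span (Finset.mem_coe.mpr
        (Finset.mem_image.mpr ⟨p, hp, rfl⟩)))
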